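/- arXiv:0904.1336 — 3 statements merged into one kernel-verified Lean document; each statement's English description precedes it below -/
import Mathlib

section
/- Let A be a Schrödinger operator on a finite tree, λ < μ two eigenvalues with eigenvectors u, v. If G is a strong positive sign graph of u, then v cannot be strictly positive on all of G ∪ δ(G): i.e., it is impossible that v(x) > 0 for all x ∈ G and the linear extension ṽ > 0 on the nodal domain of ũ containing G. Equivalently, v must vanish or change sign on the closed nodal domain determined by G. -/
open scoped Classical
open Finset

/-- A finite weighted graph: positive symmetric weights on edges, zero off edges. -/
structure WeightedGraph (V : Type) [Fintype V] [DecidableEq V] where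
  G : SimpleGraph V
  c : V → V → ℝ
  symm : ∀ x y, c x y = c y x
  pos : ∀ x y, G.Adj x y → 0 < c x y
  not_adj : ∀ x y, ¬ G.Adj x y → c x y = 0

variable {V : Type} [Fintype V] [DecidableEq V]

/-- The weighted Laplacian `(L f)(x) = ∑_{y∼x} c(x,y) (f x - f y)`. -/
noncomputable def lap (W : WeightedGraph V) (f : V → ℝ) (x : V) : ℝ :=
  ∑ y, if W.G.Adj x y then W.c x y * (f x - f y) else 0

/-- The Schrödinger operator `A = L + r`. -/
noncomputable def schrod (W : WeightedGraph V) (r : V → ℝ) (f : V → ℝ) (x : V) : ℝ :=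
  lap W f x + r x * f x

/-- `u` is a (nonzero) eigenvector of `A = L + r` with eigenvalue `μ`. -/
def IsEigenpair (W : WeightedGraph V) (r : V → ℝ) (μ : ℝ) (u : V → ℝ) : Prop :=
  u ≠ 0 ∧ ∀ x, schrod W r u x = μ * u x

/-- A strong positive sign graph of `u`: a maximal connected vertex set on which `u > 0`. -/
def IsPosSignGraph (G : SimpleGraph V) (u : V → ℝ) (S : Set V) : Prop :=
  (G.induce S).Connected ∧ (∀ x ∈ S, 0 < u x) ∧
    ∀ T : Set V, S ⊆ T → (G.induce T).Connected → (∀ x ∈ T, 0 < u x) → T = S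

/-- A strong negative sign graph of `u`: a maximal connected vertex set on which `u < 0`. -/
def IsNegSignGraph (G : SimpleGraph V) (u : V → ℝ) (S : Set V) : Prop :=
  (G.induce S).Connected ∧ (∀ x ∈ S, u x < 0) ∧
    ∀ T : Set V, S ⊆ T → (G.induce T).Connected → (∀ x ∈ T, u x < 0) → T = S

/-- A strong sign graph of `u`. -/
def IsSignGraph (G : SimpleGraph V) (u : V → ℝ) (S : Set V) : Prop :=
  IsPosSignGraph G u S ∨ IsNegSignGraph G u S

/-- The number of strong sign graphs of `u`. -/
noncomputable def signGraphCount (G : SimpleGraph V) (u : V → ℝ) : ℕ :=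
  Nat.card {S : Set V // IsSignGraph G u S}

/-- The length of the edge `(x,y)`: `l(x,y) = 1/c(x,y)`. -/
noncomputable def elen (W : WeightedGraph V) (x y : V) : ℝ := 1 / W.c x y

/-- Disjoint union of the (closed) edge intervals together with the vertices. -/
abbrev EdgeSpace (W : WeightedGraph V) : Type :=
  (Σ e : {p : V × V // W.G.Adj p.1 p.2}, ↥(Set.Icc (0:ℝ) (elen W e.1.1 e.1.2))) ⊕ V

/-- Canonical description of a point of the metric tree: either a vertex, or an interior
edge point recorded as the unordered pair of (endpoint, distance to that endpoint). -/
noncomputable def descr (W : WeightedGraph V) : EdgeSpace W → V ⊕ Sym2 (V × ℝ)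
  | Sum.inr x => Sum.inl x
  | Sum.inl ⟨e, t⟩ =>
      if (t : ℝ) = 0 then Sum.inl e.1.1
      else if (t : ℝ) = elen W e.1.1 e.1.2 then Sum.inl e.1.2
      else Sum.inr (Sym2.mk (e.1.1, (t : ℝ)) (e.1.2, elen W e.1.1 e.1.2 - (t : ℝ)))

/-- The metric tree: the set of canonical descriptions of points, i.e. the geometric
realization of the weighted graph with edge `(x,y)` identified with `[0, l(x,y)]`. -/
abbrev MT (W : WeightedGraph V) : Type := ↥(Set.range (descr W))

/-- Quotient (gluing) topology on the metric tree. -/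
noncomputable instance (W : WeightedGraph V) : TopologicalSpace (MT W) :=
  letI : TopologicalSpace V := ⊥
  TopologicalSpace.coinduced (fun p => (⟨descr W p, ⟨p, rfl⟩⟩ : MT W)) inferInstance

/-- Value of the piecewise-linear extension of `u` at a described point. -/
noncomputable def lineVal (u : V → ℝ) : V ⊕ Sym2 (V × ℝ) → ℝ
  | Sum.inl x => u x
  | Sum.inr s => Sym2.lift ⟨fun a b => (b.2 * u a.1 + a.2 * u b.1) / (a.2 + b.2),
      fun a b => by dsimp only; ring_nf⟩ s

/-- The piecewise-linear extension `ũ` of `u : V → ℝ` to the metric tree. -/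
noncomputable def uext (W : WeightedGraph V) (u : V → ℝ) (p : MT W) : ℝ := lineVal u p.1

/-- The embedding of a vertex into the metric tree. -/
def vtx (W : WeightedGraph V) (x : V) : MT W := ⟨Sum.inl x, ⟨Sum.inr x, rfl⟩⟩

/-- A nodal domain of `ũ`: a maximal connected subset of the metric tree on which
`ũ` has constant strict sign. -/
def IsNodalDomain (W : WeightedGraph V) (u : V → ℝ) (D : Set (MT W)) : Prop :=
  D.Nonempty ∧ IsPreconnected D ∧
    ((∀ p ∈ D, 0 < uext W u p) ∨ (∀ p ∈ D, uext W u p < 0)) ∧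
    ∀ D' : Set (MT W), D ⊆ D' → IsPreconnected D' →
      ((∀ p ∈ D', 0 < uext W u p) ∨ (∀ p ∈ D', uext W u p < 0)) → D' = D

/-- Number of nodal domains of `ũ`. -/
noncomputable def nodalCount (W : WeightedGraph V) (u : V → ℝ) : ℕ :=
  Nat.card {D : Set (MT W) // IsNodalDomain W u D}

/-- A zero of `ũ`, counted as a maximal connected subset of the metric tree on which
`ũ` vanishes (so a maximal zero subgraph counts as a single zero). -/
def IsZeroComponent (W : WeightedGraph V) (u : V → ℝ) (Z : Set (MT W)) : Prop :=
  Z.Nonempty ∧ IsPreconnected Z ∧ (∀ p ∈ Z, uext W u p = 0) ∧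
    ∀ Z' : Set (MT W), Z ⊆ Z' → IsPreconnected Z' → (∀ p ∈ Z', uext W u p = 0) → Z' = Z

/-- Number of zeros of `ũ` (each maximal zero subgraph counting as one zero). -/
noncomputable def zeroCount (W : WeightedGraph V) (u : V → ℝ) : ℕ :=
  Nat.card {Z : Set (MT W) // IsZeroComponent W u Z}


private lemma MTaux_exists_bad_edge (W : WeightedGraph V) (r : V → ℝ) (lam mu : ℝ)
    (u v : V → ℝ)
    (hu : IsEigenpair W r lam u) (hv : IsEigenpair W r mu v) (hlt : lam < mu)
    (S : Set V) (hSne : S.Nonempty) (hupos : ∀ x ∈ S, 0 < u x)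
    (hvpos : ∀ x ∈ S, 0 < v x) :
    ∃ x ∈ S, ∃ y, y ∉ S ∧ W.G.Adj x y ∧ u x * v y - u y * v x < 0 := by
  classical
  set F : Finset V := Finset.univ.filter (· ∈ S) with hF
  have hmemF : ∀ z, z ∈ F ↔ z ∈ S := by intro z; simp [hF]
  set g : V → V → ℝ :=
    fun a b => if W.G.Adj a b then W.c a b * (u a * v b - u b * v a) else 0 with hg
  have hrow : ∀ a, v a * lap W u a - u a * lap W v a = ∑ b, g a b := by
    intro a
    unfold lap
    rw [Finset.mul_sum, Finset.mul_sum, ← Finset.sum_sub_distrib]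
    refine Finset.sum_congr rfl fun b _ => ?_
    by_cases h : W.G.Adj a b <;> simp [hg, h] <;> ring
  have hanti : ∀ a b, g b a = - g a b := by
    intro a b
    by_cases h : W.G.Adj a b
    · simp only [hg, if_pos h, if_pos h.symm, W.symm b a]; ring
    · have h' : ¬ W.G.Adj b a := fun hh => h hh.symm
      simp [hg, h, h']
  have hdiag : ∑ a ∈ F, ∑ b ∈ F, g a b = 0 := by
    have h1 : ∑ a ∈ F, ∑ b ∈ F, g a b = ∑ a ∈ F, ∑ b ∈ F, g b a := Finset.sum_comm
    have h2 : ∑ a ∈ F, ∑ b ∈ F, g b a = - ∑ a ∈ F, ∑ b ∈ F, g a b := by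
      rw [← Finset.sum_neg_distrib]
      refine Finset.sum_congr rfl fun a _ => ?_
      rw [← Finset.sum_neg_distrib]
      exact Finset.sum_congr rfl fun b _ => hanti a b
    linarith [h1, h2]
  have hEig : ∀ a ∈ F, v a * lap W u a - u a * lap W v a = (lam - mu) * (u a * v a) := by
    intro a _
    have h1 := hu.2 a
    have h2 := hv.2 a
    simp only [schrod] at h1 h2
    linear_combination v a * h1 - u a * h2
  have hsum1 : ∑ a ∈ F, ∑ b, g a b = (lam - mu) * ∑ a ∈ F, (u a * v a) := by
    rw [Finset.mul_sum]
    refine Finset.sum_congr rfl fun a ha => ?_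
    rw [← hrow a]; exact hEig a ha
  have hsplit : ∑ a ∈ F, ∑ b, g a b
      = ∑ a ∈ F, ∑ b ∈ F, g a b + ∑ a ∈ F, ∑ b ∈ Fᶜ, g a b := by
    rw [← Finset.sum_add_distrib]
    exact Finset.sum_congr rfl fun a _ => (Finset.sum_add_sum_compl F (g a)).symm
  have hFne : F.Nonempty := ⟨hSne.choose, (hmemF _).2 hSne.choose_spec⟩
  have hposuv : 0 < ∑ a ∈ F, (u a * v a) :=
    Finset.sum_pos (fun a ha => mul_pos (hupos a ((hmemF a).1 ha)) (hvpos a ((hmemF a).1 ha))) hFne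
  have hneg : ∑ a ∈ F, ∑ b ∈ Fᶜ, g a b < 0 := by nlinarith [hsum1, hsplit, hdiag]
  have hlt1 : ∑ a ∈ F, ∑ b ∈ Fᶜ, g a b < ∑ a ∈ F, (0:ℝ) := by simpa using hneg
  obtain ⟨x, hxF, hx⟩ := Finset.exists_lt_of_sum_lt hlt1
  have hlt2 : ∑ b ∈ Fᶜ, g x b < ∑ b ∈ Fᶜ, (0:ℝ) := by simpa using hx
  obtain ⟨y, hyFc, hy⟩ := Finset.exists_lt_of_sum_lt hlt2
  have hyS : y ∉ S := fun h => by simp [hmemF] at hyFc; exact hyFc h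
  by_cases hadj : W.G.Adj x y
  · refine ⟨x, (hmemF x).1 hxF, y, hyS, hadj, ?_⟩
    have hc := W.pos x y hadj
    simp only [hg, if_pos hadj] at hy
    nlinarith [hy]
  · simp [hg, hadj] at hy

private lemma MTaux_insert_connected (G : SimpleGraph V) (S : Set V)
    (hS : (G.induce S).Connected)
    {x y : V} (hx : x ∈ S) (hadj : G.Adj x y) :
    (G.induce (insert y S)).Connected := by
  have hsub : S ⊆ insert y S := Set.subset_insert y S
  have hreach : ∀ a : (insert y S : Set V),
      (G.induce (insert y S)).Reachable a ⟨x, hsub hx⟩ := by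
    rintro ⟨a, ha⟩
    rcases Set.mem_insert_iff.mp ha with rfl | haS
    · refine SimpleGraph.Adj.reachable ?_
      simpa using hadj.symm
    · have h := hS.preconnected ⟨a, haS⟩ ⟨x, hx⟩
      exact h.map (G.induceHomOfLE hsub).toHom
  haveI : Nonempty (insert y S : Set V) := ⟨⟨x, hsub hx⟩⟩
  exact SimpleGraph.Connected.mk fun a b => (hreach a).trans (hreach b).symm

private lemma MTaux_boundary_nonpos (G : SimpleGraph V) (u : V → ℝ) (S : Set V)
    (hS : IsPosSignGraph G u S) {x y : V} (hx : x ∈ S) (hy : y ∉ S) (hadj : G.Adj x y) :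
    u y ≤ 0 := by
  by_contra h
  push_neg at h
  have hT : (G.induce (insert y S)).Connected := MTaux_insert_connected G S hS.1 hx hadj
  have heq := hS.2.2 (insert y S) (Set.subset_insert y S) hT
    (by
      rintro z hz
      rcases Set.mem_insert_iff.mp hz with rfl | hzS
      · exact h
      · exact hS.2.1 z hzS)
  exact hy (heq ▸ Set.mem_insert y S)

/-- The canonical quotient map onto the metric tree. -/
noncomputable def MTq (W : WeightedGraph V) (p : EdgeSpace W) : MT W :=
  ⟨descr W p, ⟨p, rfl⟩⟩

lemma uext_MTq (W : WeightedGraph V) (f : V → ℝ) (p : EdgeSpace W) :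
    uext W f (MTq W p) = lineVal f (descr W p) := rfl

lemma MTq_continuous (W : WeightedGraph V) :
    letI : TopologicalSpace V := ⊥
    Continuous (MTq W) := by
  letI : TopologicalSpace V := ⊥
  exact continuous_coinduced_rng


/-- if `Au = λu`, `Av = μv` with `λ < μ`, and `S` is a strong positive
sign graph of `u`, then `ṽ` cannot be strictly positive on the whole closed nodal
domain of `ũ` determined by `S`. -/
theorem v_not_positive_on_nodal_domain (W : WeightedGraph V) (hT : W.G.IsTree)
    (r : V → ℝ) (lam mu : ℝ) (u v : V → ℝ)
    (hu : IsEigenpair W r lam u) (hv : IsEigenpair W r mu v) (hlt : lam < mu)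
    (S : Set V) (hS : IsPosSignGraph W.G u S)
    (D : Set (MT W)) (hD : IsNodalDomain W u D) (hSD : ∀ x ∈ S, vtx W x ∈ D) :
    ¬ ∀ p ∈ closure D, 0 < uext W v p := by
  intro hpos
  -- `v` is positive on `S`
  have hvpos : ∀ z ∈ S, 0 < v z := fun z hz =>
    hpos (vtx W z) (subset_closure (hSD z hz))
  have hSne : S.Nonempty := by
    obtain ⟨⟨z, hz⟩⟩ := hS.1.nonempty
    exact ⟨z, hz⟩
  obtain ⟨x, hxS, y, hyS, hadj, hbad⟩ :=
    MTaux_exists_bad_edge W r lam mu u v hu hv hlt S hSne hS.2.1 hvpos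
  have hux : 0 < u x := hS.2.1 x hxS
  have huy : u y ≤ 0 := MTaux_boundary_nonpos W.G u S hS hxS hyS hadj
  have hvx : 0 < v x := hvpos x hxS
  have hc : 0 < W.c x y := W.pos x y hadj
  have hl : 0 < elen W x y := by
    unfold elen; exact one_div_pos.mpr hc
  have hd : 0 < u x - u y := by linarith
  set l : ℝ := elen W x y with hl_def
  set t : ℝ := l * u x / (u x - u y) with ht_def
  have ht0 : 0 < t := div_pos (mul_pos hl hux) hd
  have htl : t ≤ l := by
    rw [ht_def, div_le_iff₀ hd]
    nlinarith
  have hkey : t * (u x - u y) = l * u x := div_mul_cancel₀ _ hd.ne'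
  -- the path along the edge (x,y)
  have hlel : elen W x y = l := hl_def.symm
  let e : {p : V × V // W.G.Adj p.1 p.2} := ⟨(x, y), hadj⟩
  let φ : ℝ → MT W := fun s =>
    MTq W (Sum.inl ⟨e, Set.projIcc 0 (elen W e.1.1 e.1.2) (le_of_lt hl) s⟩)
  have hφ : Continuous φ := by
    letI : TopologicalSpace V := ⊥
    exact (MTq_continuous W).comp
      (continuous_inl.comp (continuous_sigmaMk.comp continuous_projIcc))
  have hmem : ∀ s : ℝ, 0 ≤ s → s ≤ l → s ∈ Set.Icc (0:ℝ) (elen W e.1.1 e.1.2) := by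
    intro s h0 h1; exact ⟨h0, h1⟩
  have hφ_eq : ∀ (s : ℝ) (hs : s ∈ Set.Icc (0:ℝ) (elen W e.1.1 e.1.2)),
      φ s = MTq W (Sum.inl ⟨e, ⟨s, hs⟩⟩) := by
    intro s hs
    show MTq W _ = MTq W _
    rw [Set.projIcc_of_mem]
  -- φ 0 is the vertex x
  have hφ0 : φ 0 = vtx W x := by
    rw [hφ_eq 0 (hmem 0 le_rfl hl.le)]
    apply Subtype.ext
    show descr W (Sum.inl ⟨e, ⟨0, _⟩⟩) = Sum.inl x
    simp [descr, e]
  -- the segment from x towards the zero of ũ on the edge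
  set seg : Set (MT W) := φ '' Set.Ico 0 t with hseg_def
  have hsegconn : IsPreconnected seg := isPreconnected_Ico.image φ hφ.continuousOn
  have hvtxseg : vtx W x ∈ seg := ⟨0, ⟨le_rfl, ht0⟩, hφ0⟩
  -- ũ is positive on the segment
  have hupos_seg : ∀ p ∈ seg, 0 < uext W u p := by
    rintro p ⟨s, ⟨hs0, hst⟩, rfl⟩
    have hsl : s < l := lt_of_lt_of_le hst htl
    rw [hφ_eq s (hmem s hs0 hsl.le)]
    by_cases hs : s = 0
    · subst hs
      rw [uext_MTq]
      have : descr W (Sum.inl ⟨e, ⟨0, hmem 0 le_rfl hl.le⟩⟩) = Sum.inl x := by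
        simp [descr, e]
      rw [this]; exact hux
    · have hdes : descr W (Sum.inl ⟨e, ⟨s, hmem s hs0 hsl.le⟩⟩)
          = Sum.inr (Sym2.mk (x, s) (y, elen W x y - s)) := by
        simp [descr, e, hs, hsl.ne, hlel]
      rw [uext_MTq, hdes]
      have : lineVal u (Sum.inr (Sym2.mk (x, s) (y, elen W x y - s)))
          = ((elen W x y - s) * u x + s * u y) / (s + (elen W x y - s)) := by
        simp [lineVal, Sym2.lift_mk]
      rw [this, ← hl_def]
      apply div_pos
      · nlinarith [hkey, mul_lt_mul_of_pos_right hst hd]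
      · nlinarith
  -- positivity of ũ on D
  have hDpos : ∀ p ∈ D, 0 < uext W u p := by
    rcases hD.2.2.1 with h | h
    · exact h
    · exfalso
      have h1 := h (vtx W x) (hSD x hxS)
      have h2 : uext W u (vtx W x) = u x := rfl
      rw [h2] at h1; linarith
  -- by maximality, the segment is contained in D
  have hD'conn : IsPreconnected (D ∪ seg) :=
    IsPreconnected.union (vtx W x) (hSD x hxS) hvtxseg hD.2.1 hsegconn
  have hD'eq : D ∪ seg = D := by
    refine hD.2.2.2 (D ∪ seg) Set.subset_union_left hD'conn (Or.inl ?_)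
    rintro p (hp | hp)
    · exact hDpos p hp
    · exact hupos_seg p hp
  have hseg_sub : seg ⊆ D := by
    rw [← hD'eq]; exact Set.subset_union_right
  -- the zero point of ũ on the edge lies in the closure of D
  have hp0cl : φ t ∈ closure D := by
    rw [mem_closure_iff]
    intro U hU hpU
    have hopen : IsOpen (φ ⁻¹' U) := hU.preimage hφ
    obtain ⟨ε, hε, hball⟩ := Metric.isOpen_iff.mp hopen t hpU
    set s : ℝ := max (t/2) (t - ε/2) with hs_def
    have hs_lt : s < t := max_lt (by linarith) (by linarith)
    have hs_pos : 0 < s := lt_of_lt_of_le (half_pos ht0) (le_max_left _ _)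
    have hs_ball : s ∈ Metric.ball t ε := by
      rw [Metric.mem_ball, Real.dist_eq, abs_lt]
      constructor
      · have : t - ε/2 ≤ s := le_max_right _ _
        linarith
      · linarith
    exact ⟨φ s, hball hs_ball, hseg_sub ⟨s, ⟨hs_pos.le, hs_lt⟩, rfl⟩⟩
  -- but ṽ is negative at that zero point: contradiction
  have hvp := hpos (φ t) hp0cl
  by_cases hteq : t = l
  · -- the zero is the vertex y ; then u y = 0 and v y < 0
    have huy0 : u y = 0 := by
      have : l * (u x - u y) = l * u x := by rw [← hkey, hteq]
      have h2 : l * u y = 0 := by linear_combination -this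
      rcases mul_eq_zero.mp h2 with h | h
      · exact absurd h hl.ne'
      · exact h
    have hvy : v y < 0 := by nlinarith [hbad]
    have hvt : uext W v (φ t) = v y := by
      rw [hφ_eq t (hmem t ht0.le htl), uext_MTq]
      have : descr W (Sum.inl ⟨e, ⟨t, hmem t ht0.le htl⟩⟩) = Sum.inl y := by
        simp only [descr]
        rw [if_neg (by exact ht0.ne'), if_pos (by rw [hlel]; exact hteq)]
      rw [this]
      rfl
    rw [hvt] at hvp; linarith
  · have htl' : t < l := lt_of_le_of_ne htl hteq
    have hdes : descr W (Sum.inl ⟨e, ⟨t, hmem t ht0.le htl⟩⟩)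
        = Sum.inr (Sym2.mk (x, t) (y, elen W x y - t)) := by
      simp [descr, e, ht0.ne', hteq, hlel]
    have hval : uext W v (φ t)
        = ((elen W x y - t) * v x + t * v y) / (t + (elen W x y - t)) := by
      rw [hφ_eq t (hmem t ht0.le htl), uext_MTq, hdes]
      simp [lineVal, Sym2.lift_mk]
    rw [hval, ← hl_def] at hvp
    -- numerator times (u x - u y) equals l * (u x * v y - u y * v x) < 0
    have hnum : ((l - t) * v x + t * v y) * (u x - u y) = l * (u x * v y - u y * v x) := by
      linear_combination (v y - v x) * hkey
    have hnumneg : (l - t) * v x + t * v y < 0 := by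
      nlinarith [hbad, hnum, hd]
    have hdenom : 0 < t + (l - t) := by linarith
    have := div_neg_of_neg_of_pos hnumneg hdenom
    linarith
end

section
/- (Upper bound on sign graphs, Davies–Gladwell–Leydold–Stadler) Let A be a generalized Laplacian (symmetric matrix with nonpositive off-diagonal entries) on a finite connected graph, with ordered eigenvalues λ₁ ≤ ⋯ ≤ λ_N. If λ_n has multiplicity r, then any eigenvector for λ_n has at most n + r − 1 strong sign graphs. -/
open scoped Classical
open Finset Matrix

variable {V : Type} [Fintype V] [DecidableEq V]

set_option linter.unusedSectionVars false
set_option linter.unusedVariables false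
set_option maxHeartbeats 1600000

lemma isNegSignGraph_iff (G : SimpleGraph V) (u : V → ℝ) (S : Set V) :
    IsNegSignGraph G u S ↔ IsPosSignGraph G (-u) S := by
  unfold IsNegSignGraph IsPosSignGraph
  simp [neg_pos]

lemma exists_pos_signGraph (G : SimpleGraph V) (u : V → ℝ) (x : V) (hx : 0 < u x) :
    ∃ S : Set V, IsPosSignGraph G u S ∧ x ∈ S := by
  set P : Set V := {y | 0 < u y} with hP
  have hxP : x ∈ P := hx
  set S : Set V := {y | ∃ h : y ∈ P, (G.induce P).Reachable ⟨x, hxP⟩ ⟨y, h⟩} with hS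
  have hSP : S ⊆ P := fun y hy => hy.1
  have hxS : x ∈ S := ⟨hxP, SimpleGraph.Reachable.refl _⟩
  have hconnS : (G.induce S).Connected := by
    apply SimpleGraph.induce_connected_of_patches x hxS
    intro v hv
    obtain ⟨hvP, hreach⟩ := hv
    obtain ⟨p⟩ := hreach
    set q := p.map (SimpleGraph.Embedding.induce P).toHom with hq
    refine ⟨{a | a ∈ q.support}, ?_, q.start_mem_support, q.end_mem_support, ?_⟩
    · intro a ha
      simp only [Set.mem_setOf_eq, hq, SimpleGraph.Walk.support_map, List.mem_map] at ha
      obtain ⟨b, hb, rfl⟩ := ha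
      exact ⟨b.2, ⟨p.takeUntil b hb⟩⟩
    · exact (q.connected_induce_support).preconnected _ _
  refine ⟨S, ⟨hconnS, fun y hy => hSP hy, ?_⟩, hxS⟩
  intro T hST hTconn hTpos
  have hTP : T ⊆ P := fun y hy => hTpos y hy
  apply Set.Subset.antisymm _ hST
  intro y hy
  have hr : (G.induce T).Reachable ⟨x, hST hxS⟩ ⟨y, hy⟩ := hTconn.preconnected _ _
  exact ⟨hTP hy, hr.map (G.induceHomOfLE hTP).toHom⟩

lemma exists_signGraph (G : SimpleGraph V) (u : V → ℝ) (x : V) (hx : u x ≠ 0) :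
    ∃ S : Set V, IsSignGraph G u S ∧ x ∈ S := by
  rcases lt_or_gt_of_ne hx with h | h
  · obtain ⟨S, hS, hxS⟩ := exists_pos_signGraph G (-u) x (by simpa using h)
    exact ⟨S, Or.inr ((isNegSignGraph_iff G u S).2 hS), hxS⟩
  · obtain ⟨S, hS, hxS⟩ := exists_pos_signGraph G u x h
    exact ⟨S, Or.inl hS, hxS⟩

-- two positive sign graphs whose union induces a connected graph are equal
lemma posSignGraph_eq_of_union_connected {G : SimpleGraph V} {u : V → ℝ} {S T : Set V}
    (hS : IsPosSignGraph G u S) (hT : IsPosSignGraph G u T)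
    (hc : (G.induce (S ∪ T)).Connected) : S = T := by
  have hpos : ∀ x ∈ S ∪ T, 0 < u x := by
    rintro x (hx | hx); exacts [hS.2.1 x hx, hT.2.1 x hx]
  have h1 := hS.2.2 (S ∪ T) Set.subset_union_left hc hpos
  have h2 := hT.2.2 (S ∪ T) Set.subset_union_right hc hpos
  exact h1.symm.trans h2

lemma posSignGraph_disjoint {G : SimpleGraph V} {u : V → ℝ} {S T : Set V}
    (hS : IsPosSignGraph G u S) (hT : IsPosSignGraph G u T) (hne : S ≠ T) :
    ∀ x, x ∈ S → x ∉ T := by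
  intro x hxS hxT
  exact hne (posSignGraph_eq_of_union_connected hS hT
    (SimpleGraph.induce_union_connected hS.1.preconnected hT.1.preconnected ⟨x, hxS, hxT⟩))

lemma posSignGraph_not_adj {G : SimpleGraph V} {u : V → ℝ} {S T : Set V}
    (hS : IsPosSignGraph G u S) (hT : IsPosSignGraph G u T) (hne : S ≠ T)
    {a b : V} (ha : a ∈ S) (hb : b ∈ T) : ¬ G.Adj a b := by
  intro hadj
  exact hne (posSignGraph_eq_of_union_connected hS hT
    (SimpleGraph.connected_induce_union hS.1.preconnected hT.1.preconnected ha hb hadj))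

lemma signGraph_disjoint {G : SimpleGraph V} {u : V → ℝ} {S T : Set V}
    (hS : IsSignGraph G u S) (hT : IsSignGraph G u T) (hne : S ≠ T) :
    ∀ x, x ∈ S → x ∉ T := by
  intro x hxS hxT
  rcases hS with hS | hS <;> rcases hT with hT | hT
  · exact posSignGraph_disjoint hS hT hne x hxS hxT
  · exact absurd (hS.2.1 x hxS) (not_lt.2 (hT.2.1 x hxT).le)
  · exact absurd (hT.2.1 x hxT) (not_lt.2 (hS.2.1 x hxS).le)
  · rw [isNegSignGraph_iff] at hS hT
    exact posSignGraph_disjoint hS hT hne x hxS hxT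

-- sign condition: for distinct sign graphs the product u a * A a b * u b is ≥ 0 unless A a b = 0
lemma signGraph_term_nonneg {G : SimpleGraph V} {u : V → ℝ} {S T : Set V} {A : Matrix V V ℝ}
    (hoff : ∀ x y, x ≠ y → (A x y ≤ 0 ∧ (A x y < 0 ↔ G.Adj x y)))
    (hS : IsSignGraph G u S) (hT : IsSignGraph G u T) (hne : S ≠ T)
    {a b : V} (ha : a ∈ S) (hb : b ∈ T) : 0 ≤ u a * (A a b * u b) := by
  have hab : a ≠ b := fun h => signGraph_disjoint hS hT hne a ha (h ▸ hb)
  obtain ⟨hle, hiff⟩ := hoff a b hab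
  rcases hS with hS | hS <;> rcases hT with hT | hT
  · have : ¬ G.Adj a b := posSignGraph_not_adj hS hT hne ha hb
    have : A a b = 0 := le_antisymm hle (not_lt.1 (fun hlt => this (hiff.1 hlt)))
    simp [this]
  · -- S pos, T neg : u a > 0, u b < 0
    have h1 := hS.2.1 a ha
    have h2 := hT.2.1 b hb
    exact mul_nonneg h1.le (mul_nonneg_of_nonpos_of_nonpos hle h2.le)
  · have h1 := hS.2.1 a ha
    have h2 := hT.2.1 b hb
    exact mul_nonneg_of_nonpos_of_nonpos h1.le (mul_nonpos_of_nonpos_of_nonneg hle h2.le)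
  · rw [isNegSignGraph_iff] at hS hT
    have hnadj : ¬ G.Adj a b := posSignGraph_not_adj hS hT hne ha hb
    have : A a b = 0 := le_antisymm hle (not_lt.1 (fun hlt => hnadj (hiff.1 hlt)))
    simp [this]

lemma dot_sum_right {ι : Type*} (v : V → ℝ) (s : Finset ι) (f : ι → V → ℝ) :
    v ⬝ᵥ (∑ i ∈ s, f i) = ∑ i ∈ s, v ⬝ᵥ f i := by
  simp only [dotProduct, Finset.sum_apply, Finset.mul_sum]
  rw [Finset.sum_comm]

lemma mulVec_sum' {ι : Type*} (A : Matrix V V ℝ) (s : Finset ι) (f : ι → V → ℝ) :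
    A.mulVec (∑ i ∈ s, f i) = ∑ i ∈ s, A.mulVec (f i) := by
  simpa only [Matrix.mulVecLin_apply] using map_sum A.mulVecLin f s

lemma sum_dot_left {ι : Type*} (v : V → ℝ) (s : Finset ι) (f : ι → V → ℝ) :
    (∑ i ∈ s, f i) ⬝ᵥ v = ∑ i ∈ s, f i ⬝ᵥ v := by
  simp only [dotProduct, Finset.sum_apply, Finset.sum_mul]
  rw [Finset.sum_comm]

lemma symm_dot (A : Matrix V V ℝ) (hsymm : A.IsSymm) (v w : V → ℝ) :
    v ⬝ᵥ A.mulVec w = A.mulVec v ⬝ᵥ w := by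
  rw [Matrix.dotProduct_mulVec, ← Matrix.mulVec_transpose, hsymm.eq]

lemma eigen_orth (A : Matrix V V ℝ) (hsymm : A.IsSymm) {v w' : V → ℝ} {μ ν : ℝ}
    (hv : A.mulVec v = μ • v) (hw : A.mulVec w' = ν • w') (hne : μ ≠ ν) :
    v ⬝ᵥ w' = 0 := by
  have h1 : v ⬝ᵥ A.mulVec w' = ν * (v ⬝ᵥ w') := by
    rw [hw, dotProduct_smul]; simp
  have h2 : v ⬝ᵥ A.mulVec w' = μ * (v ⬝ᵥ w') := by
    rw [symm_dot A hsymm, hv, smul_dotProduct]; simp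
  have := h1.symm.trans h2
  by_contra h
  exact hne (mul_right_cancel₀ h this).symm

/-- On the span of eigenvectors with eigenvalues `> lam`, the form `x ⬝ᵥ A x - lam ‖x‖²`
is positive definite. -/
lemma quad_pos_on_span {N : ℕ} (A : Matrix V V ℝ) (hsymm : A.IsSymm)
    (e : Fin N → ℝ) (u : Fin N → (V → ℝ))
    (hu : ∀ i, A.mulVec (u i) = e i • u i) (lam : ℝ)
    (s : Finset (Fin N)) (hs : ∀ i ∈ s, lam < e i)
    (x : V → ℝ) (hx : x ∈ Submodule.span ℝ (Set.range (fun i : {i // i ∈ s} => u i)))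
    (hx0 : x ≠ 0) : lam * (x ⬝ᵥ x) < x ⬝ᵥ A.mulVec x := by
  rw [Submodule.mem_span_range_iff_exists_fun] at hx
  obtain ⟨c, hc⟩ := hx
  set c' : Fin N → ℝ := fun i => if h : i ∈ s then c ⟨i, h⟩ else 0 with hc'
  have hx' : x = ∑ i ∈ s, c' i • u i := by
    rw [← hc, ← Finset.sum_attach s (fun i => c' i • u i)]
    apply Finset.sum_congr rfl
    intro i _
    simp [hc', i.2]
  set t : Finset ℝ := s.image e with ht
  set P : ℝ → (V → ℝ) := fun μ => ∑ i ∈ s.filter (fun i => e i = μ), c' i • u i with hPdef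
  have hxP : x = ∑ μ ∈ t, P μ := by
    rw [hx', ht, hPdef]
    exact (Finset.sum_fiberwise_of_maps_to (fun i hi => Finset.mem_image_of_mem e hi) _).symm
  have hPeig : ∀ μ : ℝ, A.mulVec (P μ) = μ • P μ := by
    intro μ
    rw [hPdef]
    rw [mulVec_sum', Finset.smul_sum]
    apply Finset.sum_congr rfl
    intro i hi
    rw [Finset.mem_filter] at hi
    rw [Matrix.mulVec_smul, hu i, hi.2, smul_comm]
  have horth : ∀ μ ν : ℝ, μ ≠ ν → P μ ⬝ᵥ P ν = 0 :=
    fun μ ν hne => eigen_orth A hsymm (hPeig μ) (hPeig ν) hne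
  have hAx : A.mulVec x = ∑ μ ∈ t, μ • P μ := by
    rw [hxP, mulVec_sum']
    exact Finset.sum_congr rfl fun μ _ => hPeig μ
  have hquad : x ⬝ᵥ A.mulVec x = ∑ μ ∈ t, μ * (P μ ⬝ᵥ P μ) := by
    rw [hAx, hxP, sum_dot_left]
    apply Finset.sum_congr rfl
    intro μ hμ
    rw [dot_sum_right]
    rw [Finset.sum_eq_single μ]
    · rw [dotProduct_smul]; simp
    · intro ν _ hν
      rw [dotProduct_smul, horth μ ν (fun h => hν h.symm)]
      simp
    · intro h; exact absurd hμ h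
  have hnorm : x ⬝ᵥ x = ∑ μ ∈ t, P μ ⬝ᵥ P μ := by
    nth_rewrite 1 [hxP]
    rw [sum_dot_left]
    apply Finset.sum_congr rfl
    intro μ hμ
    nth_rewrite 1 [hxP]
    rw [dot_sum_right, Finset.sum_eq_single μ]
    · intro ν _ hν
      exact horth μ ν (fun h => hν h.symm)
    · intro h; exact absurd hμ h
  -- some fiber is nonzero
  have hex : ∃ μ ∈ t, 0 < P μ ⬝ᵥ P μ := by
    by_contra hall
    push_neg at hall
    apply hx0
    rw [hxP]
    apply Finset.sum_eq_zero
    intro μ hμ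
    have h1 : P μ ⬝ᵥ P μ ≤ 0 := hall μ hμ
    have h2 : 0 ≤ P μ ⬝ᵥ P μ := Finset.sum_nonneg fun y _ => mul_self_nonneg _
    exact dotProduct_self_eq_zero.1 (le_antisymm h1 h2)
  obtain ⟨μ₀, hμ₀t, hμ₀⟩ := hex
  have key : 0 < ∑ μ ∈ t, (μ - lam) * (P μ ⬝ᵥ P μ) := by
    apply Finset.sum_pos'
    · intro μ hμ
      obtain ⟨i, hi, rfl⟩ := Finset.mem_image.1 hμ
      exact mul_nonneg (by linarith [hs i hi]) (Finset.sum_nonneg fun y _ => mul_self_nonneg _)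
    · refine ⟨μ₀, hμ₀t, ?_⟩
      obtain ⟨i, hi, rfl⟩ := Finset.mem_image.1 hμ₀t
      exact mul_pos (by linarith [hs i hi]) hμ₀
  rw [hquad, hnorm, Finset.mul_sum]
  have : ∑ μ ∈ t, (μ - lam) * (P μ ⬝ᵥ P μ)
      = ∑ μ ∈ t, μ * (P μ ⬝ᵥ P μ) - ∑ μ ∈ t, lam * (P μ ⬝ᵥ P μ) := by
    rw [← Finset.sum_sub_distrib]
    exact Finset.sum_congr rfl fun μ _ => by ring
  linarith [key, this ▸ key]

/-- On the span of the sign-graph components of an eigenvector `w`,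
the quadratic form `x ⬝ᵥ A x - lam ‖x‖²` is nonpositive. -/
lemma quad_nonpos_on_span {ι : Type} [Fintype ι] (A : Matrix V V ℝ) (hsymm : A.IsSymm)
    (lam : ℝ) (w : V → ℝ) (hAw : A.mulVec w = lam • w)
    (wf : ι → V → ℝ) (hsum : ∑ i, wf i = w)
    (hcross : ∀ i j : ι, i ≠ j → 0 ≤ wf i ⬝ᵥ A.mulVec (wf j))
    (hdot : ∀ i j : ι, i ≠ j → wf i ⬝ᵥ wf j = 0)
    (hwi : ∀ i : ι, wf i ⬝ᵥ w = wf i ⬝ᵥ wf i)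
    (x : V → ℝ) (hx : x ∈ Submodule.span ℝ (Set.range wf)) :
    x ⬝ᵥ A.mulVec x ≤ lam * (x ⬝ᵥ x) := by
  rw [Submodule.mem_span_range_iff_exists_fun] at hx
  obtain ⟨c, hc⟩ := hx
  set a : ι → ι → ℝ := fun i j => wf i ⬝ᵥ A.mulVec (wf j) with ha
  have hasymm : ∀ i j, a i j = a j i := by
    intro i j
    rw [ha]
    simp only
    rw [symm_dot A hsymm, dotProduct_comm]
  have hrow : ∀ i, ∑ j, a i j = lam * (wf i ⬝ᵥ wf i) := by
    intro i
    rw [ha]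
    simp only
    rw [← dot_sum_right, ← mulVec_sum', hsum, hAw, dotProduct_smul, smul_eq_mul, hwi i]
  have hAx : x ⬝ᵥ A.mulVec x = ∑ i, ∑ j, c i * c j * a i j := by
    rw [← hc, sum_dot_left]
    apply Finset.sum_congr rfl
    intro i _
    rw [smul_dotProduct, mulVec_sum', dot_sum_right, smul_eq_mul, Finset.mul_sum]
    apply Finset.sum_congr rfl
    intro j _
    rw [Matrix.mulVec_smul, dotProduct_smul]
    simp only [smul_eq_mul, ha]
    ring
  have hxx : x ⬝ᵥ x = ∑ i, c i ^ 2 * (wf i ⬝ᵥ wf i) := by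
    rw [← hc, sum_dot_left]
    apply Finset.sum_congr rfl
    intro i _
    rw [smul_dotProduct, dot_sum_right, Finset.sum_eq_single i]
    · rw [dotProduct_smul]; simp; ring
    · intro j _ hj
      rw [dotProduct_smul, hdot i j (fun h => hj h.symm)]
      simp
    · simp
  have hgoal : ∑ i, ∑ j, c i * c j * a i j ≤ ∑ i, ∑ j, c i ^ 2 * a i j := by
    have hswap : ∑ i, ∑ j, c i ^ 2 * a i j = ∑ i, ∑ j, c j ^ 2 * a i j := by
      rw [Finset.sum_comm]
      apply Finset.sum_congr rfl; intro i _
      apply Finset.sum_congr rfl; intro j _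
      rw [hasymm j i]
    have expand : ∀ i j : ι, (c i - c j) ^ 2 * a i j
        = c i ^ 2 * a i j + c j ^ 2 * a i j - 2 * (c i * c j * a i j) := by
      intro i j; ring
    have hE : ∑ i : ι, ∑ j : ι, (c i - c j) ^ 2 * a i j
        = (∑ i, ∑ j, c i ^ 2 * a i j) + (∑ i, ∑ j, c j ^ 2 * a i j)
          - 2 * ∑ i, ∑ j, c i * c j * a i j := by
      simp only [expand, Finset.sum_add_distrib, Finset.sum_sub_distrib, ← Finset.mul_sum]
    have hDpos : 0 ≤ ∑ i : ι, ∑ j : ι, (c i - c j) ^ 2 * a i j := by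
      apply Finset.sum_nonneg; intro i _
      apply Finset.sum_nonneg; intro j _
      rcases eq_or_ne i j with rfl | hij
      · simp
      · exact mul_nonneg (sq_nonneg _) (hcross i j hij)
    linarith
  calc x ⬝ᵥ A.mulVec x = ∑ i, ∑ j, c i * c j * a i j := hAx
    _ ≤ ∑ i, ∑ j, c i ^ 2 * a i j := hgoal
    _ = ∑ i, c i ^ 2 * (∑ j, a i j) := by
        apply Finset.sum_congr rfl; intro i _; rw [Finset.mul_sum]
    _ = lam * (x ⬝ᵥ x) := by
        rw [hxx, Finset.mul_sum]
        apply Finset.sum_congr rfl; intro i _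
        rw [hrow i]; ring

/-- Davies–Gladwell–Leydold–Stadler: for a generalized Laplacian `A`
(symmetric, nonpositive off-diagonal, negative exactly on edges) on a finite connected
graph, if `λ_n` (0-indexed: the `(n+1)`-st ordered eigenvalue) has multiplicity `r`,
then any eigenvector for `λ_n` has at most `(n+1) + r - 1 = n + r` strong sign graphs. -/
theorem davies_sign_graph_bound (A : Matrix V V ℝ) (hsymm : A.IsSymm)
    (G : SimpleGraph V)
    (hoff : ∀ x y, x ≠ y → (A x y ≤ 0 ∧ (A x y < 0 ↔ G.Adj x y)))
    (hconn : G.Connected)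
    (N : ℕ) (hN : Fintype.card V = N)
    (e : Fin N → ℝ) (hmono : Monotone e)
    (u : Fin N → (V → ℝ))
    (hu : ∀ i, u i ≠ 0 ∧ A.mulVec (u i) = e i • u i)
    (hind : LinearIndependent ℝ u)
    (n : Fin N) (rmul : ℕ) (hr : rmul = Nat.card {i : Fin N // e i = e n})
    (w : V → ℝ) (hw : w ≠ 0) (hAw : A.mulVec w = e n • w) :
    signGraphCount G w ≤ n.val + rmul := by
  set lam := e n with hlam
  set ι := {S : Set V // IsSignGraph G w S} with hι
  haveI : Fintype ι := Fintype.ofFinite ι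
  -- the component vectors
  set wf : ι → V → ℝ := fun S => Set.indicator S.1 w with hwf
  have hstrict : ∀ S : ι, ∀ x ∈ S.1, w x ≠ 0 := by
    rintro ⟨S, hS | hS⟩ x hx
    · exact ne_of_gt (hS.2.1 x hx)
    · exact ne_of_lt (hS.2.1 x hx)
  have hdisj : ∀ S T : ι, S ≠ T → ∀ x, x ∈ S.1 → x ∉ T.1 := by
    intro S T hne x hx
    exact signGraph_disjoint S.2 T.2 (fun h => hne (Subtype.ext h)) x hx
  have hsum : ∑ S : ι, wf S = w := by
    funext x
    rw [Finset.sum_apply]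
    by_cases hx : w x = 0
    · rw [hx]
      apply Finset.sum_eq_zero
      intro S _
      rw [hwf]
      simp only
      rw [Set.indicator_apply_eq_zero]
      intro hxS
      exact absurd hx (hstrict S x hxS)
    · obtain ⟨S₀, hS₀, hxS₀⟩ := exists_signGraph G w x hx
      rw [Finset.sum_eq_single_of_mem (⟨S₀, hS₀⟩ : ι) (Finset.mem_univ _)]
      · exact Set.indicator_of_mem hxS₀ w
      · intro T _ hT
        exact Set.indicator_of_notMem (hdisj ⟨S₀, hS₀⟩ T (fun h => hT h.symm) x hxS₀) w
  have hdot : ∀ S T : ι, S ≠ T → wf S ⬝ᵥ wf T = 0 := by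
    intro S T hne
    apply Finset.sum_eq_zero
    intro x _
    by_cases hx : x ∈ S.1
    · rw [hwf]; simp only
      rw [Set.indicator_of_notMem (hdisj S T hne x hx) w, mul_zero]
    · rw [hwf]; simp only
      rw [Set.indicator_of_notMem hx w, zero_mul]
  have hwi : ∀ S : ι, wf S ⬝ᵥ w = wf S ⬝ᵥ wf S := by
    intro S
    apply Finset.sum_congr rfl
    intro x _
    by_cases hx : x ∈ S.1
    · rw [hwf]; simp only
      rw [Set.indicator_of_mem hx w]
    · rw [hwf]; simp only
      rw [Set.indicator_of_notMem hx w, zero_mul, zero_mul]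
  have hcross : ∀ S T : ι, S ≠ T → 0 ≤ wf S ⬝ᵥ A.mulVec (wf T) := by
    intro S T hne
    have hexp : wf S ⬝ᵥ A.mulVec (wf T) = ∑ x, ∑ y, wf S x * (A x y * wf T y) := by
      simp only [dotProduct, Matrix.mulVec, Finset.mul_sum]
    rw [hexp]
    apply Finset.sum_nonneg; intro x _
    apply Finset.sum_nonneg; intro y _
    by_cases hx : x ∈ S.1
    · by_cases hy : y ∈ T.1
      · rw [hwf]; simp only
        rw [Set.indicator_of_mem hx w, Set.indicator_of_mem hy w]
        exact signGraph_term_nonneg hoff S.2 T.2 (fun h => hne (Subtype.ext h)) hx hy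
      · rw [hwf]; simp only
        rw [Set.indicator_of_notMem hy w, mul_zero, mul_zero]
    · rw [hwf]; simp only
      rw [Set.indicator_of_notMem hx w, zero_mul]
  -- linear independence of the component vectors
  have hWind : LinearIndependent ℝ wf := by
    rw [Fintype.linearIndependent_iff]
    intro g hg S
    obtain ⟨⟨x₀, hx₀⟩⟩ : Nonempty ↥S.1 := by
      rcases S.2 with hS | hS
      exacts [hS.1.nonempty, hS.1.nonempty]
    have := congrFun hg x₀
    rw [Finset.sum_apply] at this
    simp only [Pi.smul_apply, smul_eq_mul, Pi.zero_apply] at this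
    rw [Finset.sum_eq_single_of_mem S (Finset.mem_univ _)] at this
    · rw [hwf] at this; simp only at this
      rw [Set.indicator_of_mem hx₀ w] at this
      exact (mul_eq_zero.1 this).resolve_right (hstrict S x₀ hx₀)
    · intro T _ hT
      rw [hwf]; simp only
      rw [Set.indicator_of_notMem (hdisj S T (fun h => hT h.symm) x₀ hx₀) w, mul_zero]
  -- subspaces
  set s : Finset (Fin N) := univ.filter (fun i => lam < e i) with hsdef
  set Usp := Submodule.span ℝ (Set.range (fun i : {i // i ∈ s} => u i)) with hUsp
  set Wsp := Submodule.span ℝ (Set.range wf) with hWsp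
  have hUind : LinearIndependent ℝ (fun i : {i // i ∈ s} => u i) :=
    hind.comp Subtype.val Subtype.val_injective
  have hUrank : Module.finrank ℝ Usp = s.card := by
    rw [hUsp, finrank_span_eq_card hUind, Fintype.card_coe]
  have hWrank : Module.finrank ℝ Wsp = Fintype.card ι := by
    rw [hWsp, finrank_span_eq_card hWind]
  have hinf : Wsp ⊓ Usp = ⊥ := by
    by_contra hbot
    obtain ⟨x, hxmem, hx0⟩ := Submodule.exists_mem_ne_zero_of_ne_bot hbot
    have h1 : x ⬝ᵥ A.mulVec x ≤ lam * (x ⬝ᵥ x) :=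
      quad_nonpos_on_span A hsymm lam w hAw wf hsum hcross hdot hwi x hxmem.1
    have h2 : lam * (x ⬝ᵥ x) < x ⬝ᵥ A.mulVec x :=
      quad_pos_on_span A hsymm e u (fun i => (hu i).2) lam s
        (fun i hi => (Finset.mem_filter.1 hi).2) x hxmem.2 hx0
    linarith
  have hdim : Fintype.card ι + s.card ≤ N := by
    have h1 := Submodule.finrank_sup_add_finrank_inf_eq Wsp Usp
    rw [hinf, finrank_bot, add_zero, hUrank, hWrank] at h1
    have h2 : Module.finrank ℝ ↥(Wsp ⊔ Usp) ≤ Module.finrank ℝ (V → ℝ) :=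
      Submodule.finrank_le _
    rw [Module.finrank_fintype_fun_eq_card, hN] at h2
    omega
  -- counting eigenvalues
  have hcount : (univ.filter (fun i => e i ≤ lam)).card + s.card = N := by
    have := Finset.card_filter_add_card_filter_not
      (s := (univ : Finset (Fin N))) (p := fun i => e i ≤ lam)
    simp only [not_le] at this
    rw [Finset.card_univ, Fintype.card_fin] at this
    rw [hsdef]
    exact this
  have hle_bound : (univ.filter (fun i => e i ≤ lam)).card ≤ n.val + rmul := by
    have hsubset : univ.filter (fun i => e i ≤ lam)
        ⊆ univ.filter (fun i => e i < lam) ∪ univ.filter (fun i => e i = lam) := by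
      intro i hi
      rw [Finset.mem_filter] at hi
      rcases lt_or_eq_of_le hi.2 with h | h
      · exact Finset.mem_union_left _ (Finset.mem_filter.2 ⟨Finset.mem_univ _, h⟩)
      · exact Finset.mem_union_right _ (Finset.mem_filter.2 ⟨Finset.mem_univ _, h⟩)
    have h1 : (univ.filter (fun i => e i < lam)).card ≤ n.val := by
      have hsub2 : univ.filter (fun i => e i < lam) ⊆ univ.filter (fun i => i < n) := by
        intro i hi
        rw [Finset.mem_filter] at hi ⊢
        refine ⟨Finset.mem_univ _, ?_⟩
        by_contra hni
        exact absurd (hmono (not_lt.1 hni)) (not_le.2 hi.2)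
      calc (univ.filter (fun i => e i < lam)).card
          ≤ (univ.filter (fun i => i < n)).card := Finset.card_le_card hsub2
        _ = (Finset.Iio n).card := by congr 1; ext i; simp
        _ = n.val := by rw [Fin.card_Iio]
    have h2 : (univ.filter (fun i => e i = lam)).card = rmul := by
      rw [hr, Nat.card_eq_fintype_card, Fintype.card_subtype]
    calc (univ.filter (fun i => e i ≤ lam)).card
        ≤ (univ.filter (fun i => e i < lam) ∪ univ.filter (fun i => e i = lam)).card :=
          Finset.card_le_card hsubset
      _ ≤ (univ.filter (fun i => e i < lam)).card + (univ.filter (fun i => e i = lam)).card :=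
          Finset.card_union_le _ _
      _ ≤ n.val + rmul := by rw [h2]; exact Nat.add_le_add_right h1 _
  have hm : signGraphCount G w = Fintype.card ι := by
    rw [signGraphCount, Nat.card_eq_fintype_card]
  omega
end

section
/- Let u be a function on a finite weighted tree and ũ its piecewise-linear extension to the metric tree. Then u has exactly n strong sign graphs (maximal connected vertex sets of constant strict sign) if and only if ũ has exactly n nodal domains (maximal connected subsets of the metric tree of constant strict sign); the correspondence sends each strong sign graph G to the unique nodal domain containing G. -/
open scoped Classical
open Finset

variable {V : Type} [Fintype V] [DecidableEq V]

set_option linter.unusedSectionVars false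

section GraphAux

variable {G : SimpleGraph V} {u : V → ℝ}

lemma induce_singleton_connected (G : SimpleGraph V) (x : V) :
    (G.induce {x}).Connected := by
  haveI : Nonempty ↥({x} : Set V) := ⟨⟨x, rfl⟩⟩
  refine ⟨fun a b => ?_⟩
  have : a = b := Subtype.ext ((show (a : V) = x from a.2).trans (show (b : V) = x from b.2).symm)
  exact this ▸ SimpleGraph.Reachable.refl _

lemma exists_walk_in_set {S : Set V} (h : (G.induce S).Connected)
    {x y : V} (hx : x ∈ S) (hy : y ∈ S) :
    ∃ w : G.Walk x y, ∀ v ∈ w.support, v ∈ S := by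
  obtain ⟨w⟩ := h.preconnected ⟨x, hx⟩ ⟨y, hy⟩
  refine ⟨w.map ⟨Subtype.val, fun {a b} hab => hab⟩, ?_⟩
  intro v hv
  rw [SimpleGraph.Walk.support_map, List.mem_map] at hv
  obtain ⟨a, -, rfl⟩ := hv
  exact a.2

lemma insert_connected {S : Set V} (hS : (G.induce S).Connected) {x y : V}
    (hx : x ∈ S) (hadj : G.Adj x y) : (G.induce (insert y S)).Connected := by
  have h := SimpleGraph.induce_union_connected hS.preconnected
    (SimpleGraph.induce_pair_connected_of_adj hadj).preconnected ⟨x, hx, by simp⟩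
  have hEq : S ∪ {x, y} = insert y S := by
    ext z
    simp only [Set.mem_union, Set.mem_insert_iff, Set.mem_singleton_iff]
    constructor
    · rintro (h | rfl | rfl)
      · exact Or.inr h
      · exact Or.inr hx
      · exact Or.inl rfl
    · rintro (rfl | h)
      · exact Or.inr (Or.inr rfl)
      · exact Or.inl h
  rwa [hEq] at h

lemma adj_mem_posSignGraph {S : Set V} (hS : IsPosSignGraph G u S) {x y : V}
    (hx : x ∈ S) (hadj : G.Adj x y) (hy : 0 < u y) : y ∈ S := by
  have h1 := insert_connected hS.1 hx hadj
  have h2 : ∀ z ∈ insert y S, 0 < u z := by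
    rintro z (rfl | hz)
    · exact hy
    · exact hS.2.1 z hz
  have := hS.2.2 (insert y S) (Set.subset_insert _ _) h1 h2
  rw [← this]
  exact Set.mem_insert _ _

lemma posSignGraph_eq {S T : Set V} (hS : IsPosSignGraph G u S)
    (hT : IsPosSignGraph G u T) {x : V} (hxS : x ∈ S) (hxT : x ∈ T) : S = T := by
  have hu := SimpleGraph.induce_union_connected hS.1.preconnected hT.1.preconnected ⟨x, hxS, hxT⟩
  have hpos : ∀ z ∈ S ∪ T, 0 < u z := by
    rintro z (h | h)
    · exact hS.2.1 z h
    · exact hT.2.1 z h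
  have h1 := hS.2.2 _ Set.subset_union_left hu hpos
  have h2 := hT.2.2 _ Set.subset_union_right hu hpos
  exact h1.symm.trans h2

lemma exists_posSignGraph (G : SimpleGraph V) (u : V → ℝ) {x : V} (hx : 0 < u x) :
    ∃ S, IsPosSignGraph G u S ∧ x ∈ S := by
  classical
  set F : Set (Set V) := {T | x ∈ T ∧ (G.induce T).Connected ∧ ∀ z ∈ T, 0 < u z} with hF
  have hne : F.Nonempty := ⟨{x}, rfl, induce_singleton_connected G x, by
    rintro z rfl; exact hx⟩
  obtain ⟨S, hSF, hmax⟩ := Set.Finite.exists_maximalFor id F (Set.toFinite F) hne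
  refine ⟨S, ⟨hSF.2.1, hSF.2.2, ?_⟩, hSF.1⟩
  intro T hST hTconn hTpos
  exact Set.Subset.antisymm (hmax ⟨hST hSF.1, hTconn, hTpos⟩ hST) hST

end GraphAux

section MTAux

variable (W : WeightedGraph V)

/-- The (ordered) edges of the graph. -/
abbrev EdgeT := {p : V × V // W.G.Adj p.1 p.2}

lemma elen_pos (e : EdgeT W) : 0 < elen W e.1.1 e.1.2 := by
  unfold elen
  exact one_div_pos.mpr (W.pos _ _ e.2)

/-- The gluing map. -/
noncomputable def qMT : EdgeSpace W → MT W := fun p => ⟨descr W p, ⟨p, rfl⟩⟩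

/-- The parametrization of the edge `e` inside the metric tree. -/
noncomputable def segMT (e : EdgeT W)
    (t : ↥(Set.Icc (0:ℝ) (elen W e.1.1 e.1.2))) : MT W :=
  qMT W (Sum.inl ⟨e, t⟩)

lemma isOpen_MT_iff {s : Set (MT W)} :
    IsOpen s ↔ ∀ e : EdgeT W, IsOpen (segMT W e ⁻¹' s) := by
  letI : TopologicalSpace V := ⊥
  haveI : DiscreteTopology V := ⟨rfl⟩
  have h1 : IsOpen s ↔ IsOpen (qMT W ⁻¹' s) := isOpen_coinduced
  rw [h1, isOpen_sum_iff]
  simp only [isOpen_discrete (Sum.inr ⁻¹' (qMT W ⁻¹' s)), and_true]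
  rw [isOpen_sigma_iff]
  exact Iff.rfl

lemma continuous_segMT (e : EdgeT W) : Continuous (segMT W e) :=
  continuous_def.mpr fun s hs => (isOpen_MT_iff W).mp hs e

/-- Real-parametrized (clamped) edge parametrization. -/
noncomputable def segR (e : EdgeT W) (t : ℝ) : MT W :=
  segMT W e (Set.projIcc 0 _ (elen_pos W e).le t)

lemma continuous_segR (e : EdgeT W) : Continuous (segR W e) :=
  (continuous_segMT W e).comp continuous_projIcc

lemma isPreconnected_segR (e : EdgeT W) (a b : ℝ) :
    IsPreconnected (segR W e '' Set.Icc a b) :=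
  isPreconnected_Icc.image _ (continuous_segR W e).continuousOn

lemma segR_of_mem (e : EdgeT W) {t : ℝ} (ht : t ∈ Set.Icc 0 (elen W e.1.1 e.1.2)) :
    segR W e t = segMT W e ⟨t, ht⟩ := by
  unfold segR
  rw [Set.projIcc_of_mem]

lemma segMT_zero (e : EdgeT W) (h : (0:ℝ) ∈ Set.Icc (0:ℝ) (elen W e.1.1 e.1.2)) :
    segMT W e ⟨0, h⟩ = vtx W e.1.1 := by
  apply Subtype.ext
  simp [segMT, qMT, descr, vtx]

lemma segMT_len (e : EdgeT W)
    (h : elen W e.1.1 e.1.2 ∈ Set.Icc (0:ℝ) (elen W e.1.1 e.1.2)) :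
    segMT W e ⟨elen W e.1.1 e.1.2, h⟩ = vtx W e.1.2 := by
  apply Subtype.ext
  simp [segMT, qMT, descr, vtx, (elen_pos W e).ne']

lemma segMT_coe_interior (e : EdgeT W) {t : ℝ}
    (ht : t ∈ Set.Icc (0:ℝ) (elen W e.1.1 e.1.2)) (h0 : t ≠ 0)
    (hl : t ≠ elen W e.1.1 e.1.2) :
    (segMT W e ⟨t, ht⟩).1
      = Sum.inr (Sym2.mk (e.1.1, t) (e.1.2, elen W e.1.1 e.1.2 - t)) := by
  simp [segMT, qMT, descr, h0, hl]

lemma segR_zero (e : EdgeT W) : segR W e 0 = vtx W e.1.1 := by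
  unfold segR
  rw [Set.projIcc_left, segMT_zero]

lemma segR_len (e : EdgeT W) : segR W e (elen W e.1.1 e.1.2) = vtx W e.1.2 := by
  unfold segR
  rw [Set.projIcc_right, segMT_len]

lemma exists_rep (p : MT W) :
    (∃ x, p = vtx W x) ∨
      ∃ (e : EdgeT W) (t : ℝ) (ht : t ∈ Set.Icc (0:ℝ) (elen W e.1.1 e.1.2)),
        t ≠ 0 ∧ t ≠ elen W e.1.1 e.1.2 ∧ p = segMT W e ⟨t, ht⟩ := by
  obtain ⟨pt, hpt⟩ := p.2
  cases pt with
  | inr x => exact Or.inl ⟨x, Subtype.ext hpt.symm⟩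
  | inl et =>
      obtain ⟨e, t⟩ := et
      by_cases h0 : (t : ℝ) = 0
      · refine Or.inl ⟨e.1.1, Subtype.ext ?_⟩
        rw [← hpt]
        simp [descr, h0, vtx]
      by_cases hl : (t : ℝ) = elen W e.1.1 e.1.2
      · refine Or.inl ⟨e.1.2, Subtype.ext ?_⟩
        rw [← hpt]
        simp [descr, h0, hl, vtx, (elen_pos W e).ne']
      · refine Or.inr ⟨e, t, t.2, h0, hl, Subtype.ext ?_⟩
        rw [← hpt]
        rfl

end MTAux

section PosD

variable (W : WeightedGraph V)

/-- The affine value of the linear extension along an (ordered) edge. -/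
noncomputable def gfun (u : V → ℝ) (e : EdgeT W) (t : ℝ) : ℝ :=
  ((elen W e.1.1 e.1.2 - t) * u e.1.1 + t * u e.1.2) / elen W e.1.1 e.1.2

variable {W}

lemma gfun_zero {u : V → ℝ} (e : EdgeT W) : gfun W u e 0 = u e.1.1 := by
  unfold gfun
  have := (elen_pos W e).ne'
  field_simp
  ring

lemma gfun_len {u : V → ℝ} (e : EdgeT W) :
    gfun W u e (elen W e.1.1 e.1.2) = u e.1.2 := by
  unfold gfun
  have := (elen_pos W e).ne'
  field_simp
  ring

lemma gfun_pos_between {u : V → ℝ} {e : EdgeT W} {a b t : ℝ} (h1 : a ≤ t) (h2 : t ≤ b)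
    (ha : 0 < gfun W u e a) (hb : 0 < gfun W u e b) : 0 < gfun W u e t := by
  rcases eq_or_lt_of_le (h1.trans h2) with h | h
  · have : t = a := le_antisymm (h ▸ h2) h1
    rwa [this]
  · have key : gfun W u e t
        = ((b - t) * gfun W u e a + (t - a) * gfun W u e b) / (b - a) := by
      unfold gfun
      have hl := (elen_pos W e).ne'
      have hba : b - a ≠ 0 := ne_of_gt (by linarith)
      field_simp
      ring
    rw [key]
    apply div_pos ?_ (by linarith)
    rcases lt_or_eq_of_le h2 with h3 | h3
    · have c1 := mul_pos (by linarith : (0:ℝ) < b - t) ha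
      have c2 : 0 ≤ (t - a) * gfun W u e b := mul_nonneg (by linarith) hb.le
      linarith
    · rw [h3, sub_self, zero_mul, zero_add]
      exact mul_pos (by linarith) hb

lemma endpoint_pos_of_gfun_pos {u : V → ℝ} {e : EdgeT W} {t : ℝ} (h0 : 0 < t)
    (hl : t < elen W e.1.1 e.1.2) (h : 0 < gfun W u e t) :
    0 < u e.1.1 ∨ 0 < u e.1.2 := by
  by_contra hc
  push_neg at hc
  have h1 : (elen W e.1.1 e.1.2 - t) * u e.1.1 ≤ 0 :=
    mul_nonpos_iff.mpr (Or.inl ⟨by linarith, hc.1⟩)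
  have h2 : t * u e.1.2 ≤ 0 := mul_nonpos_iff.mpr (Or.inl ⟨h0.le, hc.2⟩)
  have h3 : gfun W u e t ≤ 0 :=
    div_nonpos_of_nonpos_of_nonneg (by linarith) (elen_pos W e).le
  linarith

lemma lineVal_mk (u : V → ℝ) (x y : V) (a b : ℝ) :
    lineVal u (Sum.inr (Sym2.mk (x, a) (y, b))) = (b * u x + a * u y) / (a + b) := by
  simp [lineVal]

lemma uext_vtx (u : V → ℝ) (x : V) : uext W u (vtx W x) = u x := rfl

lemma uext_seg_interior (u : V → ℝ) (e : EdgeT W) {t : ℝ}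
    (ht : t ∈ Set.Icc (0:ℝ) (elen W e.1.1 e.1.2)) (h0 : t ≠ 0)
    (hl : t ≠ elen W e.1.1 e.1.2) :
    uext W u (segMT W e ⟨t, ht⟩) = gfun W u e t := by
  have h : uext W u (segMT W e ⟨t, ht⟩) = lineVal u ((segMT W e ⟨t, ht⟩)).1 := rfl
  rw [h, segMT_coe_interior W e ht h0 hl, lineVal_mk]
  unfold gfun
  rw [show t + (elen W e.1.1 e.1.2 - t) = elen W e.1.1 e.1.2 by ring]

/-- Predicate on canonical descriptions defining the nodal domain attached to a
positive sign graph `S`. -/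
def posP (u : V → ℝ) (S : Set V) : V ⊕ Sym2 (V × ℝ) → Prop
  | Sum.inl x => x ∈ S
  | Sum.inr s => 0 < lineVal u (Sum.inr s) ∧ ∃ a ∈ s, a.1 ∈ S

/-- The candidate nodal domain attached to a positive sign graph `S`. -/
def posD (W : WeightedGraph V) (u : V → ℝ) (S : Set V) : Set (MT W) :=
  {p | posP u S p.1}

lemma vtx_mem_posD {u : V → ℝ} {S : Set V} {x : V} :
    vtx W x ∈ posD W u S ↔ x ∈ S := Iff.rfl

lemma mem_posD_interior {u : V → ℝ} {S : Set V} (e : EdgeT W) {t : ℝ}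
    (ht : t ∈ Set.Icc (0:ℝ) (elen W e.1.1 e.1.2)) (h0 : t ≠ 0)
    (hl : t ≠ elen W e.1.1 e.1.2) :
    segMT W e ⟨t, ht⟩ ∈ posD W u S
      ↔ (0 < gfun W u e t ∧ (e.1.1 ∈ S ∨ e.1.2 ∈ S)) := by
  have hc : segMT W e ⟨t, ht⟩ ∈ posD W u S
      ↔ posP u S (Sum.inr (Sym2.mk (e.1.1, t) (e.1.2, elen W e.1.1 e.1.2 - t))) := by
    rw [show posD W u S = {p : MT W | posP u S p.1} from rfl]
    rw [Set.mem_setOf_eq, segMT_coe_interior W e ht h0 hl]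
  rw [hc]
  show (0 < lineVal u _ ∧ _) ↔ _
  rw [lineVal_mk,
    show t + (elen W e.1.1 e.1.2 - t) = elen W e.1.1 e.1.2 by ring]
  have hmem : (∃ a ∈ Sym2.mk (e.1.1, t) (e.1.2, elen W e.1.1 e.1.2 - t), a.1 ∈ S)
      ↔ (e.1.1 ∈ S ∨ e.1.2 ∈ S) := by
    constructor
    · rintro ⟨a, ha, haS⟩
      rw [Sym2.mem_iff] at ha
      rcases ha with rfl | rfl
      · exact Or.inl haS
      · exact Or.inr haS
    · rintro (h | h)
      · exact ⟨(e.1.1, t), Sym2.mem_iff.mpr (Or.inl rfl), h⟩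
      · exact ⟨(e.1.2, elen W e.1.1 e.1.2 - t), Sym2.mem_iff.mpr (Or.inr rfl), h⟩
  rw [hmem]
  exact Iff.rfl

lemma posD_pos {u : V → ℝ} {S : Set V} (hS : IsPosSignGraph W.G u S) {p : MT W}
    (hp : p ∈ posD W u S) : 0 < uext W u p := by
  obtain ⟨p1, hp1⟩ := p
  cases p1 with
  | inl x => exact hS.2.1 x hp
  | inr s => exact hp.1

lemma mem_posD_of_left {u : V → ℝ} {S : Set V} (hS : IsPosSignGraph W.G u S)
    (e : EdgeT W) (hx : e.1.1 ∈ S) {t : ℝ}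
    (ht : t ∈ Set.Icc (0:ℝ) (elen W e.1.1 e.1.2)) (hg : 0 < gfun W u e t) :
    segMT W e ⟨t, ht⟩ ∈ posD W u S := by
  by_cases h0 : t = 0
  · subst h0
    rw [segMT_zero]
    exact hx
  by_cases hl : t = elen W e.1.1 e.1.2
  · subst hl
    rw [segMT_len]
    exact adj_mem_posSignGraph hS hx e.2 (by rwa [gfun_len] at hg)
  · exact (mem_posD_interior e ht h0 hl).mpr ⟨hg, Or.inl hx⟩

lemma mem_posD_of_right {u : V → ℝ} {S : Set V} (hS : IsPosSignGraph W.G u S)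
    (e : EdgeT W) (hy : e.1.2 ∈ S) {t : ℝ}
    (ht : t ∈ Set.Icc (0:ℝ) (elen W e.1.1 e.1.2)) (hg : 0 < gfun W u e t) :
    segMT W e ⟨t, ht⟩ ∈ posD W u S := by
  by_cases h0 : t = 0
  · subst h0
    rw [segMT_zero]
    exact adj_mem_posSignGraph hS hy e.2.symm (by rwa [gfun_zero] at hg)
  by_cases hl : t = elen W e.1.1 e.1.2
  · subst hl
    rw [segMT_len]
    exact hy
  · exact (mem_posD_interior e ht h0 hl).mpr ⟨hg, Or.inr hy⟩

end PosD

section PosDMain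

variable {W : WeightedGraph V}

lemma continuous_gfun_sub (u : V → ℝ) (e : EdgeT W) :
    Continuous (fun t : ↥(Set.Icc (0:ℝ) (elen W e.1.1 e.1.2)) => gfun W u e ↑t) := by
  unfold gfun
  exact (((continuous_const.sub continuous_subtype_val).mul continuous_const).add
    (continuous_subtype_val.mul continuous_const)).div_const _

lemma posD_isOpen {u : V → ℝ} {S : Set V} (hS : IsPosSignGraph W.G u S) :
    IsOpen (posD W u S) := by
  rw [isOpen_MT_iff]
  intro e
  have hl0 : 0 < elen W e.1.1 e.1.2 := elen_pos W e
  by_cases hx : e.1.1 ∈ S <;> by_cases hy : e.1.2 ∈ S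
  · -- both endpoints in S : preimage is everything
    have : segMT W e ⁻¹' posD W u S = Set.univ := by
      ext ⟨t, ht⟩
      simp only [Set.mem_preimage, Set.mem_univ, iff_true]
      by_cases h0 : t = 0
      · subst h0; rw [segMT_zero]; exact hx
      · refine mem_posD_of_left hS e hx ht ?_
        refine gfun_pos_between ht.1 ht.2 ?_ ?_
        · rw [gfun_zero]; exact hS.2.1 _ hx
        · rw [gfun_len]; exact hS.2.1 _ hy
    rw [this]; exact isOpen_univ
  · -- x ∈ S, y ∉ S
    have huy : ¬ 0 < u e.1.2 := fun h => hy (adj_mem_posSignGraph hS hx e.2 h)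
    have : segMT W e ⁻¹' posD W u S
        = (fun t : ↥(Set.Icc (0:ℝ) (elen W e.1.1 e.1.2)) => gfun W u e ↑t) ⁻¹' Set.Ioi 0 := by
      ext ⟨t, ht⟩
      simp only [Set.mem_preimage, Set.mem_Ioi]
      by_cases h0 : t = 0
      · subst h0; rw [segMT_zero, gfun_zero]
        exact iff_of_true hx (hS.2.1 _ hx)
      by_cases hl : t = elen W e.1.1 e.1.2
      · subst hl; rw [segMT_len, gfun_len]
        exact iff_of_false hy huy
      · rw [mem_posD_interior e ht h0 hl]
        simp [hx]
    rw [this]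
    exact (isOpen_Ioi).preimage (continuous_gfun_sub u e)
  · -- x ∉ S, y ∈ S
    have hux : ¬ 0 < u e.1.1 := fun h => hx (adj_mem_posSignGraph hS hy e.2.symm h)
    have : segMT W e ⁻¹' posD W u S
        = (fun t : ↥(Set.Icc (0:ℝ) (elen W e.1.1 e.1.2)) => gfun W u e ↑t) ⁻¹' Set.Ioi 0 := by
      ext ⟨t, ht⟩
      simp only [Set.mem_preimage, Set.mem_Ioi]
      by_cases h0 : t = 0
      · subst h0; rw [segMT_zero, gfun_zero]
        exact iff_of_false hx hux
      by_cases hl : t = elen W e.1.1 e.1.2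
      · subst hl; rw [segMT_len, gfun_len]
        exact iff_of_true hy (hS.2.1 _ hy)
      · rw [mem_posD_interior e ht h0 hl]
        simp [hy]
    rw [this]
    exact (isOpen_Ioi).preimage (continuous_gfun_sub u e)
  · -- neither endpoint in S : preimage empty
    have : segMT W e ⁻¹' posD W u S = ∅ := by
      ext ⟨t, ht⟩
      simp only [Set.mem_preimage, Set.mem_empty_iff_false, iff_false]
      by_cases h0 : t = 0
      · subst h0; rw [segMT_zero]; exact hx
      by_cases hl : t = elen W e.1.1 e.1.2
      · subst hl; rw [segMT_len]; exact hy
      · rw [mem_posD_interior e ht h0 hl]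
        rintro ⟨-, h | h⟩
        exacts [hx h, hy h]
    rw [this]; exact isOpen_empty

lemma walk_chain {u : V → ℝ} {S : Set V} (hS : IsPosSignGraph W.G u S) :
    ∀ {x y : V} (w : W.G.Walk x y), (∀ v ∈ w.support, v ∈ S) →
      ∃ C, C ⊆ posD W u S ∧ IsPreconnected C ∧ vtx W x ∈ C ∧ vtx W y ∈ C := by
  intro x y w
  induction w with
  | nil =>
      rename_i z
      intro h
      refine ⟨{vtx W z}, ?_, isPreconnected_singleton, rfl, rfl⟩
      rintro p rfl
      exact h z (by simp)
  | @cons a b c hadj w ih =>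
      intro h
      have ha : a ∈ S := h a (by simp)
      have hb : b ∈ S := h b (by simp)
      obtain ⟨C', hC'sub, hC'pre, hbC', hcC'⟩ := ih (fun v hv => h v (by simp [hv]))
      set e : EdgeT W := ⟨(a, b), hadj⟩ with he
      refine ⟨segR W e '' Set.Icc 0 (elen W a b) ∪ C', ?_, ?_, ?_, ?_⟩
      · rintro p (⟨t, ht, rfl⟩ | hp)
        · rw [segR_of_mem W e ht]
          refine mem_posD_of_left hS e ha ht ?_
          refine gfun_pos_between ht.1 ht.2 ?_ ?_
          · rw [gfun_zero]; exact hS.2.1 _ ha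
          · rw [gfun_len]; exact hS.2.1 _ hb
        · exact hC'sub hp
      · refine IsPreconnected.union (vtx W b) ?_ hbC' (isPreconnected_segR W e 0 _) hC'pre
        exact ⟨elen W a b, ⟨(elen_pos W e).le, le_refl _⟩, segR_len W e⟩
      · exact Or.inl ⟨0, ⟨le_refl _, (elen_pos W e).le⟩, segR_zero W e⟩
      · exact Or.inr hcC'

lemma point_attach {u : V → ℝ} {S : Set V} (hS : IsPosSignGraph W.G u S)
    {p : MT W} (hp : p ∈ posD W u S) :
    ∃ x ∈ S, ∃ C, C ⊆ posD W u S ∧ IsPreconnected C ∧ p ∈ C ∧ vtx W x ∈ C := by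
  rcases exists_rep _ p with ⟨x, rfl⟩ | ⟨e, t, ht, h0, hl, rfl⟩
  · exact ⟨x, hp, {vtx W x}, by rintro q rfl; exact hp, isPreconnected_singleton, rfl, rfl⟩
  · rw [mem_posD_interior e ht h0 hl] at hp
    obtain ⟨hg, hxy⟩ := hp
    rcases hxy with hx | hy
    · refine ⟨e.1.1, hx, segR W e '' Set.Icc 0 t, ?_, isPreconnected_segR W e 0 t, ?_, ?_⟩
      · rintro q ⟨t', ht', rfl⟩
        have ht'' : t' ∈ Set.Icc (0:ℝ) (elen W e.1.1 e.1.2) := ⟨ht'.1, ht'.2.trans ht.2⟩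
        rw [segR_of_mem W e ht'']
        refine mem_posD_of_left hS e hx ht'' ?_
        refine gfun_pos_between ht'.1 ht'.2 ?_ hg
        rw [gfun_zero]; exact hS.2.1 _ hx
      · exact ⟨t, ⟨ht.1, le_refl _⟩, segR_of_mem W e ht⟩
      · exact ⟨0, ⟨le_refl _, ht.1⟩, segR_zero W e⟩
    · refine ⟨e.1.2, hy, segR W e '' Set.Icc t (elen W e.1.1 e.1.2), ?_,
        isPreconnected_segR W e t _, ?_, ?_⟩
      · rintro q ⟨t', ht', rfl⟩
        have ht'' : t' ∈ Set.Icc (0:ℝ) (elen W e.1.1 e.1.2) := ⟨ht.1.trans ht'.1, ht'.2⟩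
        rw [segR_of_mem W e ht'']
        refine mem_posD_of_right hS e hy ht'' ?_
        refine gfun_pos_between ht'.1 ht'.2 hg ?_
        rw [gfun_len]; exact hS.2.1 _ hy
      · exact ⟨t, ⟨le_refl _, ht.2⟩, segR_of_mem W e ht⟩
      · exact ⟨elen W e.1.1 e.1.2, ⟨ht.2, le_refl _⟩, segR_len W e⟩

lemma posD_preconnected {u : V → ℝ} {S : Set V} (hS : IsPosSignGraph W.G u S) :
    IsPreconnected (posD W u S) := by
  apply isPreconnected_of_forall_pair
  intro p hp q hq
  obtain ⟨xp, hxp, Cp, hCp, hCppre, hpCp, hvp⟩ := point_attach hS hp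
  obtain ⟨xq, hxq, Cq, hCq, hCqpre, hqCq, hvq⟩ := point_attach hS hq
  obtain ⟨w, hw⟩ := exists_walk_in_set hS.1 hxp hxq
  obtain ⟨Cm, hCm, hCmpre, hvpm, hvqm⟩ := walk_chain hS w hw
  refine ⟨(Cp ∪ Cm) ∪ Cq, ?_, Or.inl (Or.inl hpCp), Or.inr hqCq, ?_⟩
  · rintro r ((h | h) | h)
    exacts [hCp h, hCm h, hCq h]
  · refine IsPreconnected.union (vtx W xq) (Or.inr hvqm) hvq ?_ hCqpre
    exact IsPreconnected.union (vtx W xp) hvp hvpm hCppre hCmpre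

lemma exists_posD_mem {u : V → ℝ} {p : MT W} (hp : 0 < uext W u p) :
    ∃ S, IsPosSignGraph W.G u S ∧ p ∈ posD W u S := by
  rcases exists_rep _ p with ⟨x, rfl⟩ | ⟨e, t, ht, h0, hl, rfl⟩
  · rw [uext_vtx] at hp
    obtain ⟨S, hS, hxS⟩ := exists_posSignGraph W.G u hp
    exact ⟨S, hS, hxS⟩
  · rw [uext_seg_interior u e ht h0 hl] at hp
    have h0' : 0 < t := lt_of_le_of_ne ht.1 (Ne.symm h0)
    have hl' : t < elen W e.1.1 e.1.2 := lt_of_le_of_ne ht.2 hl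
    rcases endpoint_pos_of_gfun_pos h0' hl' hp with hux | huy
    · obtain ⟨S, hS, hmem⟩ := exists_posSignGraph W.G u hux
      exact ⟨S, hS, (mem_posD_interior e ht h0 hl).mpr ⟨hp, Or.inl hmem⟩⟩
    · obtain ⟨S, hS, hmem⟩ := exists_posSignGraph W.G u huy
      exact ⟨S, hS, (mem_posD_interior e ht h0 hl).mpr ⟨hp, Or.inr hmem⟩⟩

lemma posD_eq_of_mem {u : V → ℝ} {S S' : Set V} (hS : IsPosSignGraph W.G u S)
    (hS' : IsPosSignGraph W.G u S') {p : MT W} (hp : p ∈ posD W u S)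
    (hp' : p ∈ posD W u S') : S = S' := by
  rcases exists_rep _ p with ⟨x, rfl⟩ | ⟨e, t, ht, h0, hl, rfl⟩
  · exact posSignGraph_eq hS hS' hp hp'
  · rw [mem_posD_interior e ht h0 hl] at hp hp'
    rcases hp.2 with hA | hA <;> rcases hp'.2 with hB | hB
    · exact posSignGraph_eq hS hS' hA hB
    · have : e.1.2 ∈ S := adj_mem_posSignGraph hS hA e.2 (hS'.2.1 _ hB)
      exact posSignGraph_eq hS hS' this hB
    · have : e.1.1 ∈ S := adj_mem_posSignGraph hS hA e.2.symm (hS'.2.1 _ hB)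
      exact posSignGraph_eq hS hS' this hB
    · exact posSignGraph_eq hS hS' hA hB

lemma posD_isNodal {u : V → ℝ} {S : Set V} (hS : IsPosSignGraph W.G u S) :
    IsNodalDomain W u (posD W u S) := by
  obtain ⟨x₀, hx₀⟩ := Set.nonempty_coe_sort.mp hS.1.nonempty
  refine ⟨⟨vtx W x₀, hx₀⟩, posD_preconnected hS,
    Or.inl (fun p hp => posD_pos hS hp), ?_⟩
  intro D' hsub hpre hsc
  have hx₀mem : vtx W x₀ ∈ D' := hsub hx₀
  have hpos : ∀ p ∈ D', 0 < uext W u p := by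
    rcases hsc with h | h
    · exact h
    · exfalso
      have h1 := h _ hx₀mem
      rw [uext_vtx] at h1
      linarith [hS.2.1 x₀ hx₀]
  classical
  set U := posD W u S with hU
  set Vv := ⋃ S' : {T : Set V // IsPosSignGraph W.G u T ∧ T ≠ S}, posD W u S'.1 with hVv
  have hUo : IsOpen U := posD_isOpen hS
  have hVo : IsOpen Vv := isOpen_iUnion fun S' => posD_isOpen S'.2.1
  have hcover : D' ⊆ U ∪ Vv := by
    intro p hp
    obtain ⟨S'', hS'', hmem⟩ := exists_posD_mem (hpos p hp)
    by_cases hEq : S'' = S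
    · subst hEq; exact Or.inl hmem
    · exact Or.inr (Set.mem_iUnion.mpr ⟨⟨S'', hS'', hEq⟩, hmem⟩)
  have hDV : ¬ (D' ∩ Vv).Nonempty := by
    intro hne
    have hmix := hpre U Vv hUo hVo hcover ⟨vtx W x₀, hx₀mem, hx₀⟩ hne
    obtain ⟨p, -, hpU, hpV⟩ := hmix
    obtain ⟨S', hmem'⟩ := Set.mem_iUnion.mp hpV
    exact S'.2.2 (posD_eq_of_mem S'.2.1 hS hmem' hpU)
  have hsubU : D' ⊆ U := fun p hp =>
    (hcover hp).resolve_right (fun h => hDV ⟨p, hp, h⟩)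
  exact Set.Subset.antisymm hsubU hsub

lemma nodal_pos_eq_posD {u : V → ℝ} {D : Set (MT W)} (hD : IsNodalDomain W u D)
    (hpos : ∀ p ∈ D, 0 < uext W u p) :
    ∃ S, IsPosSignGraph W.G u S ∧ D = posD W u S := by
  obtain ⟨p, hp⟩ := hD.1
  obtain ⟨S, hS, hpS⟩ := exists_posD_mem (hpos p hp)
  have h1 : D ∪ posD W u S = D := by
    refine hD.2.2.2 _ Set.subset_union_left
      (IsPreconnected.union p hp hpS hD.2.1 (posD_preconnected hS)) (Or.inl ?_)
    rintro q (hq | hq)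
    · exact hpos q hq
    · exact posD_pos hS hq
  have h2 : posD W u S ⊆ D := by
    rw [← h1]; exact Set.subset_union_right
  exact ⟨S, hS, (posD_isNodal hS).2.2.2 D h2 hD.2.1 hD.2.2.1⟩

lemma nodal_unique_pos {u : V → ℝ} {S : Set V} (hS : IsPosSignGraph W.G u S)
    {D' : Set (MT W)} (hD' : IsNodalDomain W u D') (hv : ∀ x ∈ S, vtx W x ∈ D') :
    D' = posD W u S := by
  obtain ⟨x₀, hx₀⟩ := Set.nonempty_coe_sort.mp hS.1.nonempty
  have hx₀pos : 0 < u x₀ := hS.2.1 x₀ hx₀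
  have hmem := hv x₀ hx₀
  have hpos : ∀ p ∈ D', 0 < uext W u p := by
    rcases hD'.2.2.1 with h | h
    · exact h
    · exfalso
      have h1 := h _ hmem
      rw [uext_vtx] at h1
      linarith
  obtain ⟨S', hS', hEq⟩ := nodal_pos_eq_posD hD' hpos
  have hx₀S' : x₀ ∈ S' := by
    rw [hEq] at hmem
    exact hmem
  rw [hEq, posSignGraph_eq hS' hS hx₀S' hx₀]

end PosDMain

lemma lineVal_neg (u : V → ℝ) (s : V ⊕ Sym2 (V × ℝ)) :
    lineVal (-u) s = - lineVal u s := by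
  cases s with
  | inl x => simp [lineVal]
  | inr s =>
      refine Sym2.inductionOn s ?_
      intro a b
      simp only [lineVal, Sym2.lift_mk, Pi.neg_apply]
      ring

lemma uext_neg {W : WeightedGraph V} (u : V → ℝ) (p : MT W) :
    uext W (-u) p = - uext W u p :=
  lineVal_neg u p.1

lemma isNeg_iff {G : SimpleGraph V} {u : V → ℝ} {S : Set V} :
    IsNegSignGraph G u S ↔ IsPosSignGraph G (-u) S := by
  unfold IsNegSignGraph IsPosSignGraph
  simp only [Pi.neg_apply, neg_pos]

lemma isNodal_neg {W : WeightedGraph V} {u : V → ℝ} {D : Set (MT W)} :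
    IsNodalDomain W u D ↔ IsNodalDomain W (-u) D := by
  have key : ∀ E : Set (MT W),
      ((∀ p ∈ E, 0 < uext W (-u) p) ∨ (∀ p ∈ E, uext W (-u) p < 0)) ↔
        ((∀ p ∈ E, 0 < uext W u p) ∨ (∀ p ∈ E, uext W u p < 0)) := by
    intro E
    rw [or_comm]
    apply or_congr <;> constructor <;> intro h p hp <;>
      have h2 := h p hp <;> rw [uext_neg] at * <;> linarith
  constructor
  · rintro ⟨h1, h2, h3, h4⟩
    exact ⟨h1, h2, (key D).mpr h3, fun D' a b c => h4 D' a b ((key D').mp c)⟩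
  · rintro ⟨h1, h2, h3, h4⟩
    exact ⟨h1, h2, (key D).mp h3, fun D' a b c => h4 D' a b ((key D').mpr c)⟩

/-- a function `u` on a finite weighted tree has exactly `n` strong sign
graphs iff its piecewise-linear extension `ũ` has exactly `n` nodal domains, the
correspondence sending each strong sign graph to the unique nodal domain containing it. -/
theorem sign_graphs_eq_nodal_domains (W : WeightedGraph V) (hT : W.G.IsTree)
    (u : V → ℝ) :
    signGraphCount W.G u = nodalCount W u ∧
      ∀ S : Set V, IsSignGraph W.G u S →
        ∃! D : Set (MT W), IsNodalDomain W u D ∧ ∀ x ∈ S, vtx W x ∈ D := by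
  classical
  have hnotboth : ∀ {S : Set V}, IsPosSignGraph W.G u S → IsNegSignGraph W.G u S → False := by
    intro S hp hn
    obtain ⟨x, hx⟩ := Set.nonempty_coe_sort.mp hp.1.nonempty
    linarith [hp.2.1 x hx, hn.2.1 x hx]
  constructor
  · -- the counts agree
    refine Nat.card_congr (Equiv.ofBijective
      (fun S : {S : Set V // IsSignGraph W.G u S} =>
        if h : IsPosSignGraph W.G u S.1 then
          (⟨posD W u S.1, posD_isNodal h⟩ : {D : Set (MT W) // IsNodalDomain W u D})
        else
          ⟨posD W (-u) S.1, isNodal_neg.mpr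
            (posD_isNodal (isNeg_iff.mp (S.2.resolve_left h)))⟩) ⟨?_, ?_⟩)
    · -- injective
      rintro ⟨S, hS⟩ ⟨T, hT⟩ h
      dsimp only at h
      by_cases hS1 : IsPosSignGraph W.G u S <;> by_cases hT1 : IsPosSignGraph W.G u T
      · rw [dif_pos hS1, dif_pos hT1] at h
        simp only [Subtype.mk.injEq] at h
        obtain ⟨x₀, hx₀⟩ := Set.nonempty_coe_sort.mp hS1.1.nonempty
        have : vtx W x₀ ∈ posD W u T := h ▸ (vtx_mem_posD.mpr hx₀)
        exact Subtype.ext (posSignGraph_eq hS1 hT1 hx₀ (vtx_mem_posD.mp this))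
      · rw [dif_pos hS1, dif_neg hT1] at h
        simp only [Subtype.mk.injEq] at h
        exfalso
        obtain ⟨x₀, hx₀⟩ := Set.nonempty_coe_sort.mp hS1.1.nonempty
        have hm : vtx W x₀ ∈ posD W (-u) T := h ▸ (vtx_mem_posD.mpr hx₀)
        have hTneg : IsNegSignGraph W.G u T := hT.resolve_left hT1
        have := hTneg.2.1 x₀ (vtx_mem_posD.mp hm)
        linarith [hS1.2.1 x₀ hx₀]
      · rw [dif_neg hS1, dif_pos hT1] at h
        simp only [Subtype.mk.injEq] at h
        exfalso
        obtain ⟨x₀, hx₀⟩ := Set.nonempty_coe_sort.mp hT1.1.nonempty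
        have hm : vtx W x₀ ∈ posD W (-u) S := h ▸ (vtx_mem_posD.mpr hx₀)
        have hSneg : IsNegSignGraph W.G u S := hS.resolve_left hS1
        have := hSneg.2.1 x₀ (vtx_mem_posD.mp hm)
        linarith [hT1.2.1 x₀ hx₀]
      · rw [dif_neg hS1, dif_neg hT1] at h
        simp only [Subtype.mk.injEq] at h
        have hSneg : IsPosSignGraph W.G (-u) S := isNeg_iff.mp (hS.resolve_left hS1)
        have hTneg : IsPosSignGraph W.G (-u) T := isNeg_iff.mp (hT.resolve_left hT1)
        obtain ⟨x₀, hx₀⟩ := Set.nonempty_coe_sort.mp hSneg.1.nonempty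
        have : vtx W x₀ ∈ posD W (-u) T := h ▸ (vtx_mem_posD.mpr hx₀)
        exact Subtype.ext (posSignGraph_eq hSneg hTneg hx₀ (vtx_mem_posD.mp this))
    · -- surjective
      rintro ⟨D, hD⟩
      rcases hD.2.2.1 with hpos | hneg
      · obtain ⟨S, hS, hEq⟩ := nodal_pos_eq_posD hD hpos
        refine ⟨⟨S, Or.inl hS⟩, ?_⟩
        simp only [dif_pos hS]
        exact Subtype.ext hEq.symm
      · have hD' : IsNodalDomain W (-u) D := isNodal_neg.mp hD
        have hpos' : ∀ p ∈ D, 0 < uext W (-u) p := fun p hp => by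
          rw [uext_neg]; linarith [hneg p hp]
        obtain ⟨S, hS, hEq⟩ := nodal_pos_eq_posD hD' hpos'
        have hSneg : IsNegSignGraph W.G u S := isNeg_iff.mpr hS
        have hSnotpos : ¬ IsPosSignGraph W.G u S := fun h => hnotboth h hSneg
        refine ⟨⟨S, Or.inr hSneg⟩, ?_⟩
        simp only [dif_neg hSnotpos]
        exact Subtype.ext hEq.symm
  · -- the explicit correspondence
    intro S hS
    rcases hS with hS | hS
    · refine ⟨posD W u S, ⟨posD_isNodal hS, fun x hx => vtx_mem_posD.mpr hx⟩, ?_⟩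
      rintro D' ⟨hD', hv⟩
      exact nodal_unique_pos hS hD' hv
    · have hS' : IsPosSignGraph W.G (-u) S := isNeg_iff.mp hS
      refine ⟨posD W (-u) S, ⟨isNodal_neg.mpr (posD_isNodal hS'),
        fun x hx => vtx_mem_posD.mpr hx⟩, ?_⟩
      rintro D' ⟨hD', hv⟩
      exact nodal_unique_pos hS' (isNodal_neg.mp hD') hv
end
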